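/- Let (M,ρ) be a metric space, let f, g : M → ℝ ∪ {+∞}, and let λ ∈ ℝ be such that the set M₁ := {x ∈ dom f : f(x)-g(x) ≤ λ} intersects dom f ∩ dom g nontrivially. Let f₁ := f restricted to M₁ (viewed as a function on the metric subspace M₁). If x ∈ M₁ satisfies |∇f|(x) > |∇g|(x), then |∇f₁|(x) = |∇f|(x). -/

import Mathlib

open Filter Topology ENNReal

/-- The positive part `[x]⁺` of an extended real, as an element of `ℝ≥0∞`. -/
noncomputable def erealPos (x : EReal) : ℝ≥0∞ := if x = ⊤ then ⊤ else ENNReal.ofReal x.toReal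

/-- The global slope `|∇̃ f|(x) = sup_{y ≠ x} [f x - f y]⁺ / ρ(x,y)` of `f : M → ℝ ∪ {+∞}`. -/
noncomputable def globalSlope {M : Type*} [MetricSpace M] (f : M → EReal) (x : M) : ℝ≥0∞ :=
  ⨆ y ∈ {y : M | y ≠ x}, erealPos (f x - f y) / edist x y

/-- The local slope `|∇ f|(x) = limsup_{y → x, y ≠ x} [f x - f y]⁺ / ρ(x,y)`. -/
noncomputable def localSlope {M : Type*} [MetricSpace M] (f : M → EReal) (x : M) : ℝ≥0∞ :=
  Filter.limsup (fun y => erealPos (f x - f y) / edist x y) (𝓝[≠] x)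

/-- `ε`-global-critical points: `x ∈ dom f` with `f y ≥ f x - ε·ρ(y,x)` for all `y`. -/
def epsCrit {M : Type*} [MetricSpace M] (ε : ℝ) (f : M → EReal) : Set M :=
  {x | f x ≠ ⊤ ∧ ∀ y, f x - ↑(ε * dist y x) ≤ f y}

/-- on the sublevel set `M₁ = {x ∈ dom f : f x - g x ≤ λ}`, the local slope of
the restriction `f₁ = f|_{M₁}` coincides with that of `f` at every `x ∈ M₁` where
`|∇f|(x) > |∇g|(x)`. -/
private lemma erealPos_mono : Monotone erealPos := by
  intro a b h
  unfold erealPos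
  by_cases hb : b = ⊤
  · simp [hb]
  have ha : a ≠ ⊤ := fun h' => hb (top_le_iff.mp (h' ▸ h))
  simp only [ha, hb, if_false]
  by_cases hab : a = ⊥
  · simp [hab]
  exact ENNReal.ofReal_le_ofReal (EReal.toReal_le_toReal h hab hb)

private lemma limsup_map' {α β γ : Type*} [CompleteLattice α] (u : β → α) (m : γ → β)
    (F : Filter γ) : Filter.limsup (fun y => u (m y)) F = Filter.limsup u (Filter.map m F) := by
  simp only [Filter.limsup_eq, Filter.eventually_map]

private lemma EReal.top_sub_ne_top {a : EReal} (h : a ≠ ⊤) : (⊤ : EReal) - a = ⊤ := by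
  induction a using EReal.rec with
  | bot => exact EReal.top_sub_bot
  | coe r => exact EReal.top_sub_coe r
  | top => exact absurd rfl h


theorem localSlope_restrict_sublevel {M : Type*} [MetricSpace M] (f g : M → EReal) (lam : ℝ)
    (S : Set M) (hS : S = {x | f x ≠ ⊤ ∧ f x - g x ≤ (lam : EReal)})
    (hne : ∃ x ∈ S, g x ≠ ⊤)
    (x : S) (hx : localSlope g (x : M) < localSlope f (x : M)) :
    localSlope (fun y : S => f y) x = localSlope f (x : M) := by
  set x0 : M := (x : M) with hx0
  have hxS : x0 ∈ S := x.2
  rw [hS] at hxS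
  obtain ⟨hfx_top, hfg⟩ := hxS
  set u : M → ℝ≥0∞ := fun y => erealPos (f x0 - f y) / edist x0 y with hu
  -- f x0 ≠ ⊥
  have hfx_bot : f x0 ≠ ⊥ := by
    intro h
    have h0 : localSlope f x0 = 0 := by
      unfold localSlope
      have : (fun y => erealPos (f x0 - f y) / edist x0 y) = fun _ => (0 : ℝ≥0∞) := by
        funext y
        rw [h, EReal.bot_sub]
        simp [erealPos]
      rw [this]
      exact Filter.limsup_const_bot
    rw [h0] at hx
    exact absurd hx (by simp)
  have hgx_bot : g x0 ≠ ⊥ := by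
    intro h
    rw [h, EReal.sub_bot hfx_bot] at hfg
    exact absurd hfg (by simp)
  -- filter split
  set A : Filter M := 𝓝[S ∩ {x0}ᶜ] x0 with hA
  set B : Filter M := 𝓝[Sᶜ ∩ {x0}ᶜ] x0 with hB
  have hsplit : 𝓝[≠] x0 = A ⊔ B := by
    rw [hA, hB, ← nhdsWithin_union]
    congr 1
    rw [← Set.union_inter_distrib_right, Set.union_compl_self, Set.univ_inter]
  have hL : localSlope f x0 = Filter.limsup u A ⊔ Filter.limsup u B := by
    rw [localSlope, hsplit, Filter.limsup_sup_filter]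
  -- pointwise bound off S
  have hpt : ∀ y ∈ Sᶜ ∩ {x0}ᶜ, u y ≤ erealPos (g x0 - g y) / edist x0 y := by
    intro y hy
    have hyS : y ∉ S := hy.1
    rw [hS] at hyS
    by_cases hfy : f y = ⊤
    · have : u y = 0 := by
        rw [hu]
        simp only [hfy, EReal.sub_top]
        simp [erealPos]
      rw [this]; exact zero_le
    have hlt : (lam : EReal) < f y - g y := by
      by_contra hcon
      push_neg at hcon
      exact hyS ⟨hfy, hcon⟩
    have key : f x0 - f y ≤ g x0 - g y := by
      have hgy_top : g y ≠ ⊤ := by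
        intro h
        rw [h, EReal.sub_top] at hlt
        exact absurd hlt (by simp)
      by_cases hgx_top : g x0 = ⊤
      · rw [hgx_top, EReal.top_sub_ne_top hgy_top]; exact le_top
      by_cases hgy_bot : g y = ⊥
      · rw [hgy_bot, EReal.sub_bot hgx_bot]; exact le_top
      have hfy_bot : f y ≠ ⊥ := by
        intro h
        rw [h, EReal.bot_sub] at hlt
        exact absurd hlt (by simp)
      have e1 := EReal.coe_toReal hfx_top hfx_bot
      have e2 := EReal.coe_toReal hgx_top hgx_bot
      have e3 := EReal.coe_toReal hfy hfy_bot
      have e4 := EReal.coe_toReal hgy_top hgy_bot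
      rw [← e1, ← e2] at hfg
      rw [← e3, ← e4] at hlt
      rw [← e1, ← e2, ← e3, ← e4]
      norm_cast at hfg hlt ⊢
      linarith
    exact ENNReal.div_le_div_right (erealPos_mono key) _
  -- B part is small
  have hBle : Filter.limsup u B ≤ localSlope g x0 := by
    have h1 : Filter.limsup u B ≤
        Filter.limsup (fun y => erealPos (g x0 - g y) / edist x0 y) B := by
      exact Filter.limsup_le_limsup
        (by filter_upwards [eventually_mem_nhdsWithin] with y hy using hpt y hy)
    refine h1.trans ?_
    exact Filter.limsup_le_limsup_of_le (nhdsWithin_mono _ fun y hy => hy.2)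
  have hBlt : Filter.limsup u B < localSlope f x0 := lt_of_le_of_lt hBle hx
  -- A part equals the local slope
  have hAeq : Filter.limsup u A = localSlope f x0 := by
    refine le_antisymm (hL ▸ le_sup_left) ?_
    by_contra hcon
    push_neg at hcon
    have : Filter.limsup u A ⊔ Filter.limsup u B < localSlope f x0 :=
      sup_lt_iff.mpr ⟨hcon, hBlt⟩
    rw [← hL] at this
    exact lt_irrefl _ this
  -- the restricted slope equals limsup over A
  have hmap : Filter.map (Subtype.val : S → M) (𝓝[≠] x) = A := by
    have himg : (Subtype.val : S → M) '' {y : S | y ≠ x} = S ∩ {x0}ᶜ := by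
      have : {y : S | y ≠ x} = (Subtype.val : S → M) ⁻¹' {x0}ᶜ := by
        ext y
        simp [hx0, Subtype.coe_ne_coe]
      rw [this, Subtype.image_preimage_coe]
    have h2 := Topology.IsEmbedding.subtypeVal (p := fun z => z ∈ S) |>.map_nhdsWithin_eq
      {y : S | y ≠ x} x
    rw [himg] at h2
    exact h2
  have hrest : localSlope (fun y : S => f y) x = Filter.limsup u A := by
    rw [localSlope, ← hmap, ← limsup_map' u Subtype.val (𝓝[≠] x)]
    rfl
  rw [hrest, hAeq]
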